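/- Let E₁, E₂ be real normed linear spaces, U ⊆ E₁ open, and T : U → E₂ continuously directionally differentiable on U (i.e. the directional derivative DT(x,u) exists for all x ∈ U, u ∈ E₁ and the map (x,u) ↦ DT(x,u) is continuous on U × E₁). Then T is strictly Gâteaux differentiable at every x₀ ∈ U: for every v ∈ E₁, ‖T(x+tv) − T(x) − t·T'(x₀)v‖ = o(|t|) as x → x₀ and t → 0. -/

import Mathlib

open Filter Set

/-- If `T` is continuously directionally differentiable on an open set `U` (the
directional derivative `DT x u` exists for all `x ∈ U`, `u ∈ E₁` and `(x,u) ↦ DT x u`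
is continuous on `U × E₁`), then `T` is strictly Gâteaux differentiable at every
`x₀ ∈ U`: for every direction `v`, `‖T(x+tv) − T(x) − t·DT x₀ v‖ = o(|t|)` as
`x → x₀` and `t → 0`. -/
theorem statement5 {E₁ E₂ : Type*} [NormedAddCommGroup E₁] [NormedSpace ℝ E₁]
    [NormedAddCommGroup E₂] [NormedSpace ℝ E₂]
    (U : Set E₁) (hU : IsOpen U)
    (T : E₁ → E₂) (DT : E₁ → E₁ → E₂)
    (hdiff : ∀ x ∈ U, ∀ u : E₁,
      Filter.Tendsto (fun t : ℝ => t⁻¹ • (T (x + t • u) - T x))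
        (nhdsWithin 0 {(0 : ℝ)}ᶜ) (nhds (DT x u)))
    (hcont : ContinuousOn (fun p : E₁ × E₁ => DT p.1 p.2) (U ×ˢ Set.univ)) :
    ∀ x₀ ∈ U, ∀ v : E₁, ∀ ε > (0 : ℝ), ∃ δ > (0 : ℝ), ∀ x : E₁, ∀ t : ℝ,
      ‖x - x₀‖ < δ → t ≠ 0 → |t| < δ →
      ‖t⁻¹ • (T (x + t • v) - T x) - DT x₀ v‖ < ε := by
  intro x₀ hx₀ v ε hε
  have hca : ContinuousAt (fun p : E₁ × E₁ => DT p.1 p.2) (x₀, v) :=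
    hcont.continuousAt ((hU.prod isOpen_univ).mem_nhds ⟨hx₀, trivial⟩)
  have hφ : ContinuousAt (fun y : E₁ => DT y v) x₀ := by
    have hg : Continuous (fun y : E₁ => (y, v)) := by continuity
    exact ContinuousAt.comp (f := fun y : E₁ => (y, v)) hca hg.continuousAt
  obtain ⟨δ₁, hδ₁, hball⟩ := Metric.isOpen_iff.mp hU x₀ hx₀
  rw [Metric.continuousAt_iff] at hφ
  obtain ⟨δ₂, hδ₂, hφ⟩ := hφ (ε/2) (by linarith)
  set δ₃ := min δ₁ δ₂ with hδ₃def
  have hδ₃ : 0 < δ₃ := lt_min hδ₁ hδ₂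
  refine ⟨δ₃ / (2 * (1 + ‖v‖)), by positivity, ?_⟩
  intro x t hx ht htδ
  have hvpos : (0:ℝ) < 1 + ‖v‖ := by positivity
  have hsmall : δ₃ / (2 * (1 + ‖v‖)) * (1 + ‖v‖) < δ₃ := by
    have heq : δ₃ / (2 * (1 + ‖v‖)) * (1 + ‖v‖) = δ₃ / 2 := by
      field_simp
    rw [heq]; linarith
  have hmem : ∀ s ∈ Set.uIcc (0:ℝ) t, dist (x + s • v) x₀ < δ₃ := by
    intro s hs
    have habs : |s| ≤ |t| := by
      rcases Set.mem_uIcc.mp hs with h | h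
      · rw [abs_of_nonneg h.1]; exact le_trans h.2 (le_abs_self t)
      · rw [abs_of_nonpos h.2]; exact le_trans (neg_le_neg h.1) (neg_le_abs t)
    have : dist (x + s • v) x₀ ≤ ‖x - x₀‖ + |s| * ‖v‖ := by
      rw [dist_eq_norm]
      calc ‖x + s • v - x₀‖ = ‖(x - x₀) + s • v‖ := by congr 1; abel
        _ ≤ ‖x - x₀‖ + ‖s • v‖ := norm_add_le _ _
        _ = ‖x - x₀‖ + |s| * ‖v‖ := by rw [norm_smul, Real.norm_eq_abs]
    calc dist (x + s • v) x₀ ≤ ‖x - x₀‖ + |s| * ‖v‖ := this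
      _ ≤ ‖x - x₀‖ + |t| * ‖v‖ := by
          have := norm_nonneg v
          nlinarith
      _ < δ₃ / (2 * (1 + ‖v‖)) + δ₃ / (2 * (1 + ‖v‖)) * ‖v‖ := by
          have hq : (0:ℝ) < δ₃ / (2 * (1 + ‖v‖)) := by positivity
          have := norm_nonneg v
          nlinarith
      _ = δ₃ / (2 * (1 + ‖v‖)) * (1 + ‖v‖) := by ring
      _ < δ₃ := hsmall
  have hmemU : ∀ s ∈ Set.uIcc (0:ℝ) t, x + s • v ∈ U := fun s hs =>
    hball (lt_of_lt_of_le (hmem s hs) (min_le_left _ _))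
  have hderiv : ∀ s ∈ Set.uIcc (0:ℝ) t,
      HasDerivAt (fun s : ℝ => T (x + s • v)) (DT (x + s • v) v) s := by
    intro s hs
    have h1 := hdiff _ (hmemU s hs) v
    rw [hasDerivAt_iff_tendsto_slope]
    have hsub : Filter.Tendsto (fun s' : ℝ => s' - s) (nhdsWithin s {s}ᶜ)
        (nhdsWithin 0 {(0:ℝ)}ᶜ) := by
      apply tendsto_nhdsWithin_of_tendsto_nhds_of_eventually_within
      · have h0 : Filter.Tendsto (fun s' : ℝ => s' - s) (nhds s) (nhds (s - s)) :=
          ((continuous_id.sub continuous_const).tendsto s)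
        rw [sub_self] at h0
        exact h0.mono_left nhdsWithin_le_nhds
      · filter_upwards [self_mem_nhdsWithin] with s' hs'
        exact sub_ne_zero_of_ne hs'
    refine (h1.comp hsub).congr fun s' => ?_
    simp only [Function.comp_apply, slope_def_module]
    congr 2
    rw [sub_smul]
    abel
  have hkey : ‖(T (x + t • v) - t • DT x₀ v) - (T (x + (0:ℝ) • v) - (0:ℝ) • DT x₀ v)‖
      ≤ ε / 2 * ‖t - 0‖ := by
    apply (convex_uIcc (0:ℝ) t).norm_image_sub_le_of_norm_hasDerivWithin_le
      (f := fun s : ℝ => T (x + s • v) - s • DT x₀ v)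
      (f' := fun s => DT (x + s • v) v - DT x₀ v)
    · intro s hs
      have h2 : HasDerivAt (fun s : ℝ => s • DT x₀ v) (DT x₀ v) s := by
        simpa using (hasDerivAt_id s).smul_const (DT x₀ v)
      exact ((hderiv s hs).sub h2).hasDerivWithinAt
    · intro s hs
      have := hφ (lt_of_lt_of_le (hmem s hs) (min_le_right _ _))
      rw [dist_eq_norm] at this
      exact le_of_lt this
    · exact Set.left_mem_uIcc
    · exact Set.right_mem_uIcc
  simp only [zero_smul, add_zero, sub_zero] at hkey
  have habs : t⁻¹ • (T (x + t • v) - T x) - DT x₀ v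
      = t⁻¹ • ((T (x + t • v) - t • DT x₀ v) - T x) := by
    have h2 : t⁻¹ • (t • DT x₀ v) = DT x₀ v := by
      rw [smul_smul, inv_mul_cancel₀ ht, one_smul]
    simp only [smul_sub, h2]
    abel
  rw [habs, norm_smul, Real.norm_eq_abs, abs_inv]
  have htpos : (0:ℝ) < |t| := abs_pos.mpr ht
  have hkey' : ‖T (x + t • v) - t • DT x₀ v - T x‖ ≤ ε / 2 * |t| := by
    calc ‖T (x + t • v) - t • DT x₀ v - T x‖
        = ‖(T (x + t • v) - t • DT x₀ v) - (T x)‖ := by congr 1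
      _ ≤ ε / 2 * ‖t‖ := hkey
      _ = ε / 2 * |t| := by rw [Real.norm_eq_abs]
  calc |t|⁻¹ * ‖T (x + t • v) - t • DT x₀ v - T x‖
      ≤ |t|⁻¹ * (ε / 2 * |t|) := by
        apply mul_le_mul_of_nonneg_left hkey' (by positivity)
    _ = ε / 2 := by field_simp
    _ < ε := by linarith
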